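/- arXiv:2512.24248 — 6 statements merged into one kernel-verified Lean document; each statement's English description precedes it below -/
import Mathlib

section
/- Every 4×4 real matrix B = [[0,1,0,0],[a,0,1,0],[0,b,0,-1],[0,0,c,0]] with a,b,c > 0 has exactly two real eigenvalues (one positive, one negative) and two nonreal eigenvalues. -/
open Polynomial Matrix

lemma aux_factor4 {R : Type*} [CommRing R] (p w : R) :
    X^4 - C (p^2 + w^2) * X^2 + C (p^2 * w^2) =
      (X - C p) * (X + C p) * ((X - C w) * (X + C w)) := by
  simp only [map_add, C_mul, map_pow]
  ring

lemma aux_quad_ne (s : ℝ) (hs : 0 < s) : (X^2 + C s : ℝ[X]) ≠ 0 := by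
  intro h
  have := congrArg (eval 0) h
  simp at this
  exact hs.ne' this

lemma aux_quad_roots (s : ℝ) (hs : 0 < s) : (X^2 + C s : ℝ[X]).roots = 0 := by
  apply Multiset.eq_zero_of_forall_notMem
  intro x hx
  rw [mem_roots'] at hx
  have := hx.2
  simp [IsRoot] at this
  nlinarith

lemma aux_quartic (q m : ℝ) (hm : 0 < m) :
    ∃ r s : ℝ, 0 < r ∧ 0 < s ∧ r^2 * s = m ∧ s - r^2 = q := by
  set d := Real.sqrt (q^2 + 4*m) with hd
  have hdsq : d^2 = q^2 + 4*m := Real.sq_sqrt (by nlinarith)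
  have hdnn : 0 ≤ d := Real.sqrt_nonneg _
  have hy : 0 < (d - q)/2 := by nlinarith
  have hs : 0 < (d + q)/2 := by nlinarith
  refine ⟨Real.sqrt ((d - q)/2), (d + q)/2, Real.sqrt_pos.mpr hy, hs, ?_, ?_⟩
  · rw [Real.sq_sqrt hy.le]; nlinarith
  · rw [Real.sq_sqrt hy.le]; ring

/-- Every 4×4 real matrix `B = [[0,1,0,0],[a,0,1,0],[0,b,0,-1],[0,0,c,0]]`
with `a,b,c > 0` has exactly two real eigenvalues (one positive, one negative)
and two nonreal eigenvalues. -/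
theorem stmt_7 (a b c : ℝ) (ha : 0 < a) (hb : 0 < b) (hc : 0 < c) :
    let B : Matrix (Fin 4) (Fin 4) ℝ :=
      !![(0:ℝ), 1, 0, 0; a, 0, 1, 0; 0, b, 0, -1; 0, 0, c, 0]
    (∃! x : ℝ, 0 < x ∧ B.charpoly.IsRoot x) ∧
    (∃! x : ℝ, x < 0 ∧ B.charpoly.IsRoot x) ∧
    Multiset.card B.charpoly.roots = 2 ∧
    Multiset.card ((B.map Complex.ofReal).charpoly.roots.filter
      (fun z => z.im ≠ 0)) = 2 := by
  intro B
  obtain ⟨r, s, hr, hs, hrs, hq⟩ := aux_quartic (c - a - b) (a*c) (mul_pos ha hc)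
  -- the characteristic polynomial
  have hp : B.charpoly = X^4 + C (c - a - b) * X^2 - C (a*c) := by
    rw [Matrix.charpoly]
    simp [B, Matrix.det_succ_row_zero, Fin.sum_univ_succ, Matrix.charmatrix_apply,
      Matrix.diagonal_apply, Fin.succAbove]
    ring
  -- real factorization
  have hfac : B.charpoly = (X - C r) * (X + C r) * (X^2 + C s) := by
    rw [hp, ← hq, ← hrs]
    simp only [C_sub, C_mul, map_pow]
    ring
  -- evaluation criterion
  have heval : ∀ x : ℝ, B.charpoly.IsRoot x ↔ (x - r) * (x + r) * (x^2 + s) = 0 := by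
    intro x
    rw [hfac]
    simp [IsRoot]
  have hquadpos : ∀ x : ℝ, 0 < x^2 + s := fun x => by positivity
  refine ⟨?_, ?_, ?_, ?_⟩
  · -- unique positive root
    refine ⟨r, ⟨hr, (heval r).mpr (by ring)⟩, ?_⟩
    rintro x ⟨hx, hroot⟩
    rw [heval] at hroot
    rcases mul_eq_zero.mp hroot with h | h
    · rcases mul_eq_zero.mp h with h | h
      · linarith [sub_eq_zero.mp h]
      · nlinarith
    · nlinarith [hquadpos x]
  · -- unique negative root
    refine ⟨-r, ⟨by linarith, (heval (-r)).mpr (by ring)⟩, ?_⟩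
    rintro x ⟨hx, hroot⟩
    rw [heval] at hroot
    rcases mul_eq_zero.mp hroot with h | h
    · rcases mul_eq_zero.mp h with h | h
      · nlinarith
      · linarith [eq_neg_of_add_eq_zero_left h]
    · nlinarith [hquadpos x]
  · -- exactly two real roots
    rw [hfac, roots_mul (by
        exact mul_ne_zero (mul_ne_zero (X_sub_C_ne_zero r) (by
          rw [show (X + C r : ℝ[X]) = X - C (-r) by simp]
          exact X_sub_C_ne_zero (-r))) (aux_quad_ne s hs)),
      roots_mul (mul_ne_zero (X_sub_C_ne_zero r) (by
          rw [show (X + C r : ℝ[X]) = X - C (-r) by simp]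
          exact X_sub_C_ne_zero (-r)))]
    rw [show (X + C r : ℝ[X]) = X - C (-r) by simp, roots_X_sub_C, roots_X_sub_C,
      aux_quad_roots s hs]
    simp
  · -- exactly two nonreal complex roots
    set t := Real.sqrt s with ht
    have ht2 : t^2 = s := Real.sq_sqrt hs.le
    have htpos : 0 < t := Real.sqrt_pos.mpr hs
    set w : ℂ := (t : ℂ) * Complex.I with hw
    have hmap : (B.map Complex.ofReal).charpoly = B.charpoly.map Complex.ofRealHom := by
      rw [← Matrix.charpoly_map]
      rfl
    have h1 : ((c - a - b : ℝ) : ℂ) = -(((r:ℝ):ℂ)^2 + w^2) := by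
      rw [← hq, hw]
      have : ((t:ℂ))^2 = ((s:ℝ):ℂ) := by
        rw [← ht2]; push_cast; ring
      push_cast
      rw [mul_pow, Complex.I_sq]
      push_cast at this
      rw [this]; ring
    have h2 : ((a*c : ℝ) : ℂ) = -(((r:ℝ):ℂ)^2 * w^2) := by
      rw [← hrs, hw]
      have : ((t:ℂ))^2 = ((s:ℝ):ℂ) := by
        rw [← ht2]; push_cast; ring
      push_cast
      rw [mul_pow, Complex.I_sq]
      push_cast at this
      rw [this]; ring
    have hpc : (B.map Complex.ofReal).charpoly =
        (X - C ((r:ℝ):ℂ)) * (X + C ((r:ℝ):ℂ)) * ((X - C w) * (X + C w)) := by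
      rw [hmap, hp]
      rw [← aux_factor4]
      simp only [Polynomial.map_sub, Polynomial.map_add, Polynomial.map_mul,
        Polynomial.map_pow, map_X, map_C]
      rw [show Complex.ofRealHom (c - a - b) = ((c - a - b : ℝ) : ℂ) from rfl,
        show Complex.ofRealHom (a*c) = ((a*c : ℝ) : ℂ) from rfl, h1, h2]
      simp only [map_neg]
      ring
    have hXadd : ∀ u : ℂ, (X + C u : ℂ[X]) = X - C (-u) := fun u => by simp
    rw [hpc, roots_mul (by
        refine mul_ne_zero (mul_ne_zero (X_sub_C_ne_zero _) ?_) (mul_ne_zero (X_sub_C_ne_zero _) ?_)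
        · rw [hXadd]; exact X_sub_C_ne_zero _
        · rw [hXadd]; exact X_sub_C_ne_zero _),
      roots_mul (by
        refine mul_ne_zero (X_sub_C_ne_zero _) ?_
        rw [hXadd]; exact X_sub_C_ne_zero _),
      roots_mul (by
        refine mul_ne_zero (X_sub_C_ne_zero _) ?_
        rw [hXadd]; exact X_sub_C_ne_zero _)]
    rw [hXadd ((r:ℝ):ℂ), hXadd w, roots_X_sub_C, roots_X_sub_C, roots_X_sub_C, roots_X_sub_C]
    have him1 : (((r:ℝ):ℂ)).im = 0 := Complex.ofReal_im r
    have him2 : ((-((r:ℝ):ℂ))).im = 0 := by simp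
    have him3 : w.im = t := by simp [hw]
    have him4 : (-w).im = -t := by simp [hw]
    simp [Multiset.filter_add, Multiset.filter_singleton, him1, him2, him3, him4,
      htpos.ne', htpos.ne]
end

section
/- Every 5×5 real matrix B = [[0,1,0,0,0],[a,0,1,0,0],[0,b,0,-1,0],[0,0,c,0,-1],[0,0,0,d,0]] with a,b,c,d > 0 has characteristic polynomial x·(x^4 - (a+b-c-d)x^2 - (ac+ad+bd)), and hence has exactly three real eigenvalues (0, one positive, one negative) and two nonreal eigenvalues. -/
open Polynomial Matrix

set_option maxHeartbeats 2000000 in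
set_option maxRecDepth 100000 in
/-- Every 5×5 real matrix
`B = [[0,1,0,0,0],[a,0,1,0,0],[0,b,0,-1,0],[0,0,c,0,-1],[0,0,0,d,0]]` with
`a,b,c,d > 0` has characteristic polynomial
`x (x^4 - (a+b-c-d) x^2 - (ac+ad+bd))`, hence exactly three real eigenvalues
(`0`, one positive, one negative) and two nonreal eigenvalues. -/
theorem stmt_9 (a b c d : ℝ) (ha : 0 < a) (hb : 0 < b) (hc : 0 < c) (hd : 0 < d) :
    let B : Matrix (Fin 5) (Fin 5) ℝ :=
      !![(0:ℝ), 1, 0, 0, 0; a, 0, 1, 0, 0; 0, b, 0, -1, 0;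
         0, 0, c, 0, -1; 0, 0, 0, d, 0]
    B.charpoly = X * (X ^ 4 - C (a + b - c - d) * X ^ 2 - C (a * c + a * d + b * d)) ∧
    B.charpoly.IsRoot 0 ∧
    (∃! x : ℝ, 0 < x ∧ B.charpoly.IsRoot x) ∧
    (∃! x : ℝ, x < 0 ∧ B.charpoly.IsRoot x) ∧
    Multiset.card B.charpoly.roots = 3 ∧
    Multiset.card ((B.map Complex.ofReal).charpoly.roots.filter
      (fun z => z.im ≠ 0)) = 2 := by
  intro B
  -- the characteristic polynomial
  have hch : B.charpoly =
      X * (X ^ 4 - C (a + b - c - d) * X ^ 2 - C (a * c + a * d + b * d)) := by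
    have hm : charmatrix B =
        !![X, -1, 0, 0, 0; -C a, X, -1, 0, 0; 0, -C b, X, 1, 0;
           0, 0, -C c, X, 1; 0, 0, 0, -C d, X] := by
      ext i j
      fin_cases i <;> fin_cases j <;>
        simp [B, charmatrix_apply, Matrix.one_apply, Matrix.vecHead, Matrix.vecTail]
    rw [Matrix.charpoly, hm]
    simp [Matrix.det_succ_row_zero, Fin.sum_univ_succ, Matrix.det_fin_three,
      Matrix.vecHead, Matrix.vecTail, Fin.succAbove, Fin.succ_ne_zero, C_add, C_sub, C_mul]
    ring
  set p : ℝ := a + b - c - d with hp_def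
  set q : ℝ := a * c + a * d + b * d with hq_def
  have hq : 0 < q := by positivity
  -- set up the factorization data
  set D : ℝ := Real.sqrt (p ^ 2 + 4 * q) with hD_def
  have hD2 : D ^ 2 = p ^ 2 + 4 * q := Real.sq_sqrt (by positivity)
  have hDnn : 0 ≤ D := Real.sqrt_nonneg _
  have hDp : p < D := by nlinarith
  have hDp' : -p < D := by nlinarith
  set s : ℝ := (D - p) / 2 with hs_def
  have hs : 0 < s := by rw [hs_def]; linarith
  set t : ℝ := (D + p) / 2 with ht_def
  have ht : 0 < t := by rw [ht_def]; linarith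
  set r : ℝ := Real.sqrt t with hr_def
  have hr2 : r ^ 2 = t := Real.sq_sqrt ht.le
  have hr : 0 < r := Real.sqrt_pos.mpr ht
  have hrs_p : r ^ 2 - s = p := by rw [hr2, ht_def, hs_def]; ring
  have hrs_q : r ^ 2 * s = q := by
    rw [hr2, ht_def, hs_def]; linear_combination hD2 / 4
  have hfact : B.charpoly = X * ((X - C r) * ((X + C r) * (X ^ 2 + C s))) := by
    rw [hch, ← hrs_p, ← hrs_q]
    simp only [C_sub, C_mul, C_pow]
    ring
  have heval : ∀ x : ℝ, B.charpoly.IsRoot x ↔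
      x * ((x - r) * ((x + r) * (x ^ 2 + s))) = 0 := by
    intro x
    simp [IsRoot, hfact]
  have hsq_pos : ∀ x : ℝ, 0 < x ^ 2 + s := fun x => by positivity
  refine ⟨hch, ?_, ?_, ?_, ?_, ?_⟩
  · exact (heval 0).mpr (by ring)
  · refine ⟨r, ⟨hr, (heval r).mpr (by ring)⟩, ?_⟩
    rintro x ⟨hx, hroot⟩
    rw [heval] at hroot
    rcases mul_eq_zero.mp hroot with h | h
    · exact absurd h hx.ne'
    rcases mul_eq_zero.mp h with h | h
    · linarith
    rcases mul_eq_zero.mp h with h | h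
    · linarith
    · exact absurd h (hsq_pos x).ne'
  · refine ⟨-r, ⟨by linarith, (heval (-r)).mpr (by ring)⟩, ?_⟩
    rintro x ⟨hx, hroot⟩
    rw [heval] at hroot
    rcases mul_eq_zero.mp hroot with h | h
    · exact absurd h hx.ne
    rcases mul_eq_zero.mp h with h | h
    · linarith
    rcases mul_eq_zero.mp h with h | h
    · linarith
    · exact absurd h (hsq_pos x).ne'
  · -- roots over ℝ
    have h1 : (X - C r : ℝ[X]) ≠ 0 := X_sub_C_ne_zero r
    have h2 : (X + C r : ℝ[X]) ≠ 0 := by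
      have := X_sub_C_ne_zero (-r)
      simpa [sub_neg_eq_add] using this
    have h3 : (X ^ 2 + C s : ℝ[X]) ≠ 0 := fun h => by
      have : (0:ℝ) ^ 2 + s = 0 := by
        have := congrArg (eval 0) h
        simpa using this
      nlinarith
    have h4 : ((X ^ 2 + C s : ℝ[X])).roots = 0 := by
      rw [Multiset.eq_zero_iff_forall_notMem]
      intro x hx
      rw [mem_roots h3] at hx
      have : x ^ 2 + s = 0 := by simpa [IsRoot] using hx
      nlinarith [sq_nonneg x]
    have h5 : ((X + C r : ℝ[X])).roots = {-r} := by
      have he : (X + C r : ℝ[X]) = X - C (-r) := by simp [sub_neg_eq_add]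
      rw [he, roots_X_sub_C]
    rw [hfact, roots_mul (mul_ne_zero X_ne_zero (mul_ne_zero h1 (mul_ne_zero h2 h3))),
      roots_mul (mul_ne_zero h1 (mul_ne_zero h2 h3)), roots_mul (mul_ne_zero h2 h3),
      roots_X, roots_X_sub_C, h4, h5]
    simp
  · -- roots over ℂ
    set u : ℂ := (Real.sqrt s : ℂ) * Complex.I with hu_def
    have hu2 : u ^ 2 = -(s : ℂ) := by
      have hsq : ((Real.sqrt s : ℝ) : ℂ) ^ 2 = ((s : ℝ) : ℂ) := by
        rw [← Complex.ofReal_pow, Real.sq_sqrt hs.le]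
      rw [hu_def, mul_pow, Complex.I_sq, hsq]
      ring
    have hXu : ((X - C u) * (X + C u) : ℂ[X]) = X ^ 2 + C (s:ℂ) := by
      have he : ((X - C u) * (X + C u) : ℂ[X]) = X ^ 2 - C u ^ 2 := by ring
      rw [he, ← C_pow, hu2, map_neg, sub_neg_eq_add]
    have hmap : (B.map Complex.ofReal).charpoly =
        X * ((X - C (r:ℂ)) * ((X + C (r:ℂ)) * ((X - C u) * (X + C u)))) := by
      have hBm : B.map Complex.ofReal = B.map Complex.ofRealHom := rfl
      rw [hBm, Matrix.charpoly_map, hfact, hXu]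
      simp [Polynomial.map_mul, Polynomial.map_sub, Polynomial.map_add,
        Polynomial.map_pow]
    have c1 : (X - C (r:ℂ) : ℂ[X]) ≠ 0 := X_sub_C_ne_zero _
    have cplus : ∀ v : ℂ, (X + C v : ℂ[X]) = X - C (-v) := by
      intro v; simp [sub_neg_eq_add]
    have c2 : (X + C (r:ℂ) : ℂ[X]) ≠ 0 := by rw [cplus]; exact X_sub_C_ne_zero _
    have c3 : (X - C u : ℂ[X]) ≠ 0 := X_sub_C_ne_zero _
    have c4 : (X + C u : ℂ[X]) ≠ 0 := by rw [cplus]; exact X_sub_C_ne_zero _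
    have r5 : ((X + C (r:ℂ) : ℂ[X])).roots = {-(r:ℂ)} := by
      rw [cplus, roots_X_sub_C]
    have r6 : ((X + C u : ℂ[X])).roots = {-u} := by
      rw [cplus, roots_X_sub_C]
    rw [hmap, roots_mul (mul_ne_zero X_ne_zero (mul_ne_zero c1 (mul_ne_zero c2
        (mul_ne_zero c3 c4)))),
      roots_mul (mul_ne_zero c1 (mul_ne_zero c2 (mul_ne_zero c3 c4))),
      roots_mul (mul_ne_zero c2 (mul_ne_zero c3 c4)), roots_mul (mul_ne_zero c3 c4),
      roots_X, roots_X_sub_C, roots_X_sub_C, r5, r6]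
    have hsqs : Real.sqrt s ≠ 0 := (Real.sqrt_pos.mpr hs).ne'
    have hu_im : u.im = Real.sqrt s := by simp [hu_def]
    simp [Multiset.filter_add, Multiset.filter_singleton, hu_im, hsqs]
end

section
/- The 6×6 sign pattern with zero diagonal, superdiagonal signs (+,+,-,+,+), and subdiagonal all +, is not consistent: there exist two matrices in its qualitative class with different numbers of real eigenvalues. Specifically, the matrix B1 with all subdiagonal entries 1 and superdiagonal entries (1,1,-1,1,1) has 0 real eigenvalues, while the matrix B2 equal to B1 except with subdiagonal entry b_{65} = 2 has 4 real eigenvalues. -/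
open Polynomial Matrix

set_option maxRecDepth 8000

private lemma mvh {α : Type*} {n : ℕ} (f : Fin (n+1) → α) : Matrix.vecHead f = f 0 := rfl
private lemma mvt {α : Type*} {n : ℕ} (f : Fin (n+1) → α) (i : Fin n) :
    Matrix.vecTail f i = f i.succ := rfl
private lemma mv1 {α : Type*} {n : ℕ} (a : α) (u : Fin (n+1) → α) : Matrix.vecCons a u 1 = u 0 := rfl
private lemma mv2 {α : Type*} {n : ℕ} (a : α) (u : Fin (n+2) → α) : Matrix.vecCons a u 2 = u 1 := rfl
private lemma mv3 {α : Type*} {n : ℕ} (a : α) (u : Fin (n+3) → α) : Matrix.vecCons a u 3 = u 2 := rfl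
private lemma mv4 {α : Type*} {n : ℕ} (a : α) (u : Fin (n+4) → α) : Matrix.vecCons a u 4 = u 3 := rfl
private lemma mv5 {α : Type*} {n : ℕ} (a : α) (u : Fin (n+5) → α) : Matrix.vecCons a u 5 = u 4 := rfl
private lemma sa12 {n : ℕ} : Fin.succAbove (1 : Fin (n+4)) 2 = 3 := by
  rw [Fin.succAbove_of_le_castSucc _ _ (by simp [Fin.le_def, Nat.mod_eq_of_lt (show 2 < n+3 by omega)])]; rfl

set_option maxHeartbeats 4000000 in
private lemma cp1 :
    (!![(0:ℝ), 1, 0, 0, 0, 0; 1, 0, 1, 0, 0, 0; 0, 1, 0, -1, 0, 0;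
         0, 0, 1, 0, 1, 0; 0, 0, 0, 1, 0, 1; 0, 0, 0, 0, 1, 0] : Matrix (Fin 6) (Fin 6) ℝ).charpoly
      = X^6 - 3*X^4 + 2*X^2 + 1 := by
  have hc : charmatrix (!![(0:ℝ), 1, 0, 0, 0, 0; 1, 0, 1, 0, 0, 0; 0, 1, 0, -1, 0, 0;
         0, 0, 1, 0, 1, 0; 0, 0, 0, 1, 0, 1; 0, 0, 0, 0, 1, 0] : Matrix (Fin 6) (Fin 6) ℝ)
      = !![(X:ℝ[X]), -1, 0, 0, 0, 0; -1, X, -1, 0, 0, 0; 0, -1, X, 1, 0, 0;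
           0, 0, -1, X, -1, 0; 0, 0, 0, -1, X, -1; 0, 0, 0, 0, -1, X] := by
    refine Matrix.ext fun i j => ?_
    fin_cases i <;> fin_cases j <;>
      simp [charmatrix_apply, map_ofNat, mv1, mv2, mv3, mv4, mv5, mvh, mvt]
  rw [Matrix.charpoly, hc]
  norm_num [Matrix.det_succ_row_zero, Fin.sum_univ_succ, Fin.succAbove_zero, Fin.succ_succAbove_zero, Fin.succ_succAbove_succ, sa12,
    mv1, mv2, mv3, mv4, mv5, mvh, mvt]
  ring

set_option maxHeartbeats 4000000 in
private lemma cp2 :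
    (!![(0:ℝ), 1, 0, 0, 0, 0; 1, 0, 1, 0, 0, 0; 0, 1, 0, -1, 0, 0;
         0, 0, 1, 0, 1, 0; 0, 0, 0, 1, 0, 1; 0, 0, 0, 0, 2, 0] : Matrix (Fin 6) (Fin 6) ℝ).charpoly
      = X^6 - 4*X^4 + 3*X^2 + 2 := by
  have hc : charmatrix (!![(0:ℝ), 1, 0, 0, 0, 0; 1, 0, 1, 0, 0, 0; 0, 1, 0, -1, 0, 0;
         0, 0, 1, 0, 1, 0; 0, 0, 0, 1, 0, 1; 0, 0, 0, 0, 2, 0] : Matrix (Fin 6) (Fin 6) ℝ)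
      = !![(X:ℝ[X]), -1, 0, 0, 0, 0; -1, X, -1, 0, 0, 0; 0, -1, X, 1, 0, 0;
           0, 0, -1, X, -1, 0; 0, 0, 0, -1, X, -1; 0, 0, 0, 0, -2, X] := by
    refine Matrix.ext fun i j => ?_
    fin_cases i <;> fin_cases j <;>
      simp [charmatrix_apply, map_ofNat, mv1, mv2, mv3, mv4, mv5, mvh, mvt]
  rw [Matrix.charpoly, hc]
  norm_num [Matrix.det_succ_row_zero, Fin.sum_univ_succ, Fin.succAbove_zero, Fin.succ_succAbove_zero, Fin.succ_succAbove_succ, sa12,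
    mv1, mv2, mv3, mv4, mv5, mvh, mvt]
  ring

private lemma roots1 : ((X^6 - 3*X^4 + 2*X^2 + 1 : ℝ[X])).roots = 0 := by
  have hne : (X^6 - 3*X^4 + 2*X^2 + 1 : ℝ[X]) ≠ 0 := by
    intro h
    have := congrArg (eval 0) h
    simp at this
  rw [Multiset.eq_zero_iff_forall_notMem]
  intro x hx
  rw [mem_roots hne] at hx
  have h : x^6 - 3*x^4 + 2*x^2 + 1 = 0 := by simpa [IsRoot] using hx
  nlinarith [sq_nonneg (x^3-2*x), sq_nonneg (x^2-1), sq_nonneg (x^3-x), sq_nonneg x,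
    sq_nonneg (x*(x^2-2)), sq_nonneg (x^2-2), sq_nonneg (x^2*(x^2-2))]

private lemma fac2 : (X^6 - 4*X^4 + 3*X^2 + 2 : ℝ[X]) =
    (X - C (Real.sqrt 2)) * (X + C (Real.sqrt 2)) *
    ((X - C (Real.sqrt (1 + Real.sqrt 2))) * (X + C (Real.sqrt (1 + Real.sqrt 2))) *
    (X^2 - C (1 - Real.sqrt 2))) := by
  have h1 : (C (Real.sqrt 2))^2 = (2 : ℝ[X]) := by
    rw [← map_pow, Real.sq_sqrt (by norm_num)]; exact map_ofNat C 2
  have h2 : (C (Real.sqrt (1 + Real.sqrt 2)))^2 = 1 + C (Real.sqrt 2) := by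
    rw [← map_pow, Real.sq_sqrt (by positivity), map_add, _root_.map_one]
  have h3 : C (1 - Real.sqrt 2) = 1 - C (Real.sqrt 2) := by rw [map_sub, _root_.map_one]
  rw [h3]
  set t := C (Real.sqrt 2)
  set u := C (Real.sqrt (1 + Real.sqrt 2))
  linear_combination (((X:ℝ[X])^2-2) + (X^2-1+t)*(X^2-u^2)) * h1 + (X^2-1+t)*(X^2-2) * h2

private lemma roots2 : Multiset.card ((X^6 - 4*X^4 + 3*X^2 + 2 : ℝ[X])).roots = 4 := by
  have hq : ((X:ℝ[X])^2 - C (1 - Real.sqrt 2)).roots = 0 := by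
    have hm : ((X:ℝ[X])^2 - C (1 - Real.sqrt 2)).Monic := monic_X_pow_sub_C _ (by norm_num)
    rw [Multiset.eq_zero_iff_forall_notMem]
    intro x hx
    rw [mem_roots hm.ne_zero] at hx
    have h : x^2 - (1 - Real.sqrt 2) = 0 := by simpa [IsRoot] using hx
    nlinarith [Real.sq_sqrt (show (0:ℝ) ≤ 2 by norm_num), Real.sqrt_nonneg 2, sq_nonneg x,
      sq_nonneg (Real.sqrt 2 - 1)]
  have hm : ((X:ℝ[X])^2 - C (1 - Real.sqrt 2)).Monic := monic_X_pow_sub_C _ (by norm_num)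
  rw [fac2, roots_mul, roots_mul, roots_mul, roots_mul, hq,
    roots_X_sub_C, roots_X_sub_C]
  · have e1 : ((X:ℝ[X]) + C (Real.sqrt 2)) = X - C (-Real.sqrt 2) := by rw [map_neg, sub_neg_eq_add]
    have e2 : ((X:ℝ[X]) + C (Real.sqrt (1 + Real.sqrt 2)))
        = X - C (-Real.sqrt (1 + Real.sqrt 2)) := by rw [map_neg, sub_neg_eq_add]
    rw [e1, e2, roots_X_sub_C, roots_X_sub_C]
    simp
  all_goals
    refine mul_ne_zero ?_ ?_ <;>
    first
      | exact X_sub_C_ne_zero _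
      | exact hm.ne_zero
      | (rw [show ((X:ℝ[X]) + C (Real.sqrt 2)) = X - C (-Real.sqrt 2) by rw [map_neg, sub_neg_eq_add]]
         exact X_sub_C_ne_zero _)
      | (rw [show ((X:ℝ[X]) + C (Real.sqrt (1 + Real.sqrt 2))) = X - C (-Real.sqrt (1 + Real.sqrt 2)) by rw [map_neg, sub_neg_eq_add]]
         exact X_sub_C_ne_zero _)
      | (refine mul_ne_zero (mul_ne_zero ?_ ?_) ?_ <;>
          first
            | exact X_sub_C_ne_zero _
            | exact hm.ne_zero
            | (rw [show ((X:ℝ[X]) + C (Real.sqrt 2)) = X - C (-Real.sqrt 2) by rw [map_neg, sub_neg_eq_add]]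
               exact X_sub_C_ne_zero _)
            | (rw [show ((X:ℝ[X]) + C (Real.sqrt (1 + Real.sqrt 2))) = X - C (-Real.sqrt (1 + Real.sqrt 2)) by rw [map_neg, sub_neg_eq_add]]
               exact X_sub_C_ne_zero _))
      | (refine mul_ne_zero ?_ ?_ <;>
          first
            | exact X_sub_C_ne_zero _
            | exact hm.ne_zero
            | (rw [show ((X:ℝ[X]) + C (Real.sqrt 2)) = X - C (-Real.sqrt 2) by rw [map_neg, sub_neg_eq_add]]
               exact X_sub_C_ne_zero _)
            | (rw [show ((X:ℝ[X]) + C (Real.sqrt (1 + Real.sqrt 2))) = X - C (-Real.sqrt (1 + Real.sqrt 2)) by rw [map_neg, sub_neg_eq_add]]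
               exact X_sub_C_ne_zero _))

/-- The 6×6 sign pattern with zero diagonal, superdiagonal signs `(+,+,-,+,+)`
and subdiagonal all `+` is not consistent: the matrices `B1` and `B2` below have
the same entrywise sign pattern, but `B1` has 0 real eigenvalues while `B2` has
4 real eigenvalues (counted with multiplicity). -/
theorem stmt_10 :
    let B1 : Matrix (Fin 6) (Fin 6) ℝ :=
      !![(0:ℝ), 1, 0, 0, 0, 0; 1, 0, 1, 0, 0, 0; 0, 1, 0, -1, 0, 0;
         0, 0, 1, 0, 1, 0; 0, 0, 0, 1, 0, 1; 0, 0, 0, 0, 1, 0]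
    let B2 : Matrix (Fin 6) (Fin 6) ℝ :=
      !![(0:ℝ), 1, 0, 0, 0, 0; 1, 0, 1, 0, 0, 0; 0, 1, 0, -1, 0, 0;
         0, 0, 1, 0, 1, 0; 0, 0, 0, 1, 0, 1; 0, 0, 0, 0, 2, 0]
    (∀ i j, Real.sign (B1 i j) = Real.sign (B2 i j)) ∧
    Multiset.card B1.charpoly.roots = 0 ∧
    Multiset.card B2.charpoly.roots = 4 := by
  refine ⟨?_, ?_, ?_⟩
  · intro i j
    fin_cases i <;> fin_cases j <;>
      norm_num [Real.sign, mv1, mv2, mv3, mv4, mv5, mvh, mvt]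
  · rw [cp1, roots1]; rfl
  · rw [cp2]; exact roots2
end

section
/- Let B be an n×n real matrix with n odd that is combinatorially the adjacency structure of a single n-cycle in which every undirected edge is negative: B_{i,i+1}·B_{i+1,i} < 0 for all i (indices mod n), B_{ii} = 0, and all other entries 0. Then B has exactly one real eigenvalue. -/
open Polynomial Matrix Finset Filter

section helpers

variable {R : Type*} [CommRing R]

lemma my_derivative_finset_prod {ι : Type*} [DecidableEq ι] (s : Finset ι) (f : ι → R[X]) :
    derivative (∏ i ∈ s, f i) = ∑ i ∈ s, (∏ j ∈ s.erase i, f j) * derivative (f i) := by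
  induction s using Finset.induction_on with
  | empty => simp
  | insert _ _ ha ih =>
    rename_i a s
    rw [Finset.prod_insert ha, derivative_mul, ih, Finset.sum_insert ha,
      Finset.erase_insert ha]
    congr 1
    · exact mul_comm _ _
    · rw [Finset.mul_sum]
      refine Finset.sum_congr rfl fun i hi => ?_
      rw [Finset.erase_insert_of_ne (by rintro rfl; exact ha hi),
        Finset.prod_insert (fun h => ha (Finset.mem_of_mem_erase h)), mul_assoc]

lemma my_derivative_det {m : ℕ} (A : Matrix (Fin m) (Fin m) R[X]) :
    derivative A.det = ∑ i : Fin m, (A.updateCol i (fun k => derivative (A k i))).det := by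
  calc derivative A.det
      = ∑ σ : Equiv.Perm (Fin m), ∑ i : Fin m,
          ((Equiv.Perm.sign σ : ℤ) : R[X]) *
            ((∏ j ∈ Finset.univ.erase i, A (σ j) j) * derivative (A (σ i) i)) := by
        rw [Matrix.det_apply', map_sum]
        refine Finset.sum_congr rfl fun σ _ => ?_
        rw [derivative_mul,
          (show derivative (((Equiv.Perm.sign σ : ℤ) : R[X])) = 0 by simp), zero_mul, zero_add,
          my_derivative_finset_prod, Finset.mul_sum]
    _ = ∑ i : Fin m, ∑ σ : Equiv.Perm (Fin m),
          ((Equiv.Perm.sign σ : ℤ) : R[X]) *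
            ((∏ j ∈ Finset.univ.erase i, A (σ j) j) * derivative (A (σ i) i)) :=
        Finset.sum_comm
    _ = ∑ i : Fin m, (A.updateCol i (fun k => derivative (A k i))).det := by
        refine Finset.sum_congr rfl fun i _ => ?_
        rw [Matrix.det_apply']
        refine Finset.sum_congr rfl fun σ _ => ?_
        congr 1
        rw [← Finset.mul_prod_erase Finset.univ
          (fun j => A.updateCol i (fun k => derivative (A k i)) (σ j) j) (Finset.mem_univ i),
          mul_comm]
        congr 1
        · simp [Matrix.updateCol_apply]
        · exact Finset.prod_congr rfl fun j hj => by
            simp [Matrix.updateCol_apply, Finset.ne_of_mem_erase hj]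

lemma my_det_tridiag_step {k : ℕ} (T : Matrix (Fin (k+2)) (Fin (k+2)) R)
    (hz : ∀ p q : Fin (k+2), (p:ℕ)+1 < (q:ℕ) ∨ (q:ℕ)+1 < (p:ℕ) → T p q = 0) :
    T.det = T (Fin.last (k+1)) (Fin.last (k+1)) * (T.submatrix Fin.castSucc Fin.castSucc).det
      - T (Fin.last (k+1)) ((Fin.last k).castSucc) * T ((Fin.last k).castSucc) (Fin.last (k+1)) *
        ((T.submatrix Fin.castSucc Fin.castSucc).submatrix Fin.castSucc Fin.castSucc).det := by
  rw [Matrix.det_succ_row T (Fin.last (k+1))]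
  rw [Fin.sum_univ_castSucc, Fin.sum_univ_castSucc]
  have h0 : ∀ j : Fin k,
      (-1 : R) ^ ((Fin.last (k+1) : ℕ) + ((j.castSucc.castSucc : Fin (k+2)) : ℕ)) *
        T (Fin.last (k+1)) j.castSucc.castSucc *
        (T.submatrix (Fin.last (k+1)).succAbove (j.castSucc.castSucc).succAbove).det = 0 := by
    intro j
    have : T (Fin.last (k+1)) j.castSucc.castSucc = 0 := by
      refine hz _ _ (Or.inr ?_)
      simp only [Fin.coe_castSucc, Fin.val_last]
      omega
    rw [this]; ring
  rw [Finset.sum_eq_zero (fun j _ => h0 j), zero_add]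
  have hsign1 : (-1 : R) ^ ((Fin.last (k+1) : ℕ) + (((Fin.last k).castSucc : Fin (k+2)) : ℕ)) = -1 := by
    refine Odd.neg_one_pow ?_
    simp only [Fin.coe_castSucc, Fin.val_last]
    exact ⟨k, by ring⟩
  have hsign2 : (-1 : R) ^ ((Fin.last (k+1) : ℕ) + ((Fin.last (k+1) : Fin (k+2)) : ℕ)) = 1 := by
    refine Even.neg_one_pow ?_
    simp only [Fin.val_last]
    exact ⟨k+1, by ring⟩
  rw [hsign1, hsign2, one_mul]
  simp only [Fin.succAbove_last]
  have hMdet : (T.submatrix Fin.castSucc ((Fin.last k).castSucc).succAbove).det =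
      T ((Fin.last k).castSucc) (Fin.last (k+1)) *
        ((T.submatrix Fin.castSucc Fin.castSucc).submatrix Fin.castSucc Fin.castSucc).det := by
    set M : Matrix (Fin (k+1)) (Fin (k+1)) R :=
      T.submatrix Fin.castSucc ((Fin.last k).castSucc).succAbove with hM
    have hsb : ((Fin.last k).castSucc).succAbove (Fin.last k) = Fin.last (k+1) := by
      rw [Fin.succAbove_of_le_castSucc _ _ (le_refl _), Fin.succ_last]
    rw [Matrix.det_succ_column M (Fin.last k), Fin.sum_univ_castSucc]
    have h1 : ∀ i : Fin k,
        (-1 : R) ^ (((i.castSucc : Fin (k+1)) : ℕ) + ((Fin.last k : Fin (k+1)) : ℕ)) *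
          M i.castSucc (Fin.last k) *
          (M.submatrix (i.castSucc).succAbove (Fin.last k).succAbove).det = 0 := by
      intro i
      have : M i.castSucc (Fin.last k) = 0 := by
        rw [hM, Matrix.submatrix_apply, hsb]
        refine hz _ _ (Or.inl ?_)
        simp only [Fin.coe_castSucc, Fin.val_last]
        omega
      rw [this]; ring
    rw [Finset.sum_eq_zero (fun i _ => h1 i), zero_add]
    have hsign3 : (-1 : R) ^ (((Fin.last k : Fin (k+1)) : ℕ) + ((Fin.last k : Fin (k+1)) : ℕ)) = 1 := by
      refine Even.neg_one_pow ?_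
      simp only [Fin.val_last]
      exact ⟨k, rfl⟩
    rw [hsign3, one_mul]
    simp only [Fin.succAbove_last]
    have hentry : M (Fin.last k) (Fin.last k) = T ((Fin.last k).castSucc) (Fin.last (k+1)) := by
      rw [hM, Matrix.submatrix_apply, hsb]
    have hmat : M.submatrix Fin.castSucc Fin.castSucc =
        (T.submatrix Fin.castSucc Fin.castSucc).submatrix Fin.castSucc Fin.castSucc := by
      ext r c
      simp only [hM, Matrix.submatrix_apply]
      congr 1
      refine Fin.succAbove_of_castSucc_lt _ _ ?_
      simp only [Fin.lt_def, Fin.coe_castSucc, Fin.val_last]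
      exact c.isLt
    rw [hentry, hmat]
  rw [hMdet]
  ring

lemma my_det_updateCol_single {m : ℕ} (A : Matrix (Fin (m+1)) (Fin (m+1)) R) :
    (A.updateCol (Fin.last m) (Pi.single (Fin.last m) 1)).det =
      (A.submatrix Fin.castSucc Fin.castSucc).det := by
  set U := A.updateCol (Fin.last m) (Pi.single (Fin.last m) (1 : R)) with hU
  rw [Matrix.det_succ_column U (Fin.last m), Fin.sum_univ_castSucc]
  have h0 : ∀ i : Fin m,
      (-1 : R) ^ (((i.castSucc : Fin (m+1)) : ℕ) + ((Fin.last m) : ℕ)) *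
        U i.castSucc (Fin.last m) *
        (U.submatrix (i.castSucc).succAbove (Fin.last m).succAbove).det = 0 := by
    intro i
    have : U i.castSucc (Fin.last m) = 0 := by
      rw [hU, Matrix.updateCol_apply, if_pos rfl, Pi.single_apply,
        if_neg (Fin.castSucc_lt_last i).ne]
    rw [this]; ring
  rw [Finset.sum_eq_zero (fun i _ => h0 i), zero_add]
  have hsign : (-1 : R) ^ (((Fin.last m) : ℕ) + ((Fin.last m) : ℕ)) = 1 := by
    refine Even.neg_one_pow ?_
    simp only [Fin.val_last]
    exact ⟨m, rfl⟩
  have hentry : U (Fin.last m) (Fin.last m) = 1 := by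
    rw [hU, Matrix.updateCol_apply, if_pos rfl, Pi.single_apply, if_pos rfl]
  have hmat : U.submatrix Fin.castSucc Fin.castSucc = A.submatrix Fin.castSucc Fin.castSucc := by
    ext r c
    simp only [hU, Matrix.submatrix_apply,
      Matrix.updateCol_apply, if_neg (Fin.castSucc_lt_last c).ne]
  rw [hsign, one_mul, hentry, one_mul, Fin.succAbove_last, hmat]

end helpers

lemma my_tridiag_pos (x : ℝ) : ∀ m : ℕ, ∀ T : Matrix (Fin m) (Fin m) ℝ,
    (∀ p, T p p = x) →
    (∀ p q : Fin m, (p:ℕ)+1 < (q:ℕ) ∨ (q:ℕ)+1 < (p:ℕ) → T p q = 0) →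
    (∀ p q : Fin m, (q:ℕ) = (p:ℕ)+1 → T p q * T q p < 0) →
    (Even m → 0 < T.det) ∧ (Odd m → 0 ≤ x * T.det) := by
  intro m
  induction m using Nat.strong_induction_on with
  | _ m ih =>
    match m with
    | 0 =>
      intro T _ _ _
      refine ⟨fun _ => by simp [Matrix.det_isEmpty], fun h => absurd h (by decide)⟩
    | 1 =>
      intro T hd _ _
      refine ⟨fun h => absurd h (by decide), fun _ => ?_⟩
      rw [Matrix.det_fin_one, hd 0]
      exact mul_self_nonneg x
    | (k+2) =>
      intro T hd hz hneg
      set T' := T.submatrix Fin.castSucc Fin.castSucc with hT'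
      set T'' := T'.submatrix Fin.castSucc Fin.castSucc with hT''
      have ih1 := ih (k+1) (by omega) T'
        (fun p => hd _) (fun p q h => hz _ _ (by simpa using h))
        (fun p q h => hneg _ _ (by simpa using h))
      have ih2 := ih k (by omega) T''
        (fun p => hd _) (fun p q h => hz _ _ (by simpa using h))
        (fun p q h => hneg _ _ (by simpa using h))
      have hstep := my_det_tridiag_step T hz
      rw [hd (Fin.last (k+1))] at hstep
      have ht : T (Fin.last (k+1)) ((Fin.last k).castSucc) *
          T ((Fin.last k).castSucc) (Fin.last (k+1)) < 0 := by
        have := hneg ((Fin.last k).castSucc) (Fin.last (k+1)) (by simp)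
        linarith [this]
      rw [← hT', ← hT''] at hstep
      constructor
      · intro he
        have hk : Even k := by rcases he with ⟨r, hr⟩; exact ⟨r - 1, by omega⟩
        have h1 : 0 ≤ x * T'.det := ih1.2 hk.add_one
        have h2 : 0 < T''.det := ih2.1 hk
        rw [hstep]
        nlinarith [mul_pos (neg_pos.mpr ht) h2]
      · intro ho
        have hk : Odd k := by rcases ho with ⟨r, hr⟩; exact ⟨r - 1, by omega⟩
        have h1 : 0 < T'.det := ih1.1 hk.add_one
        have h2 : 0 ≤ x * T''.det := ih2.2 hk
        rw [hstep]
        have hx2 : 0 ≤ x * x * T'.det := mul_nonneg (mul_self_nonneg x) h1.le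
        nlinarith [mul_nonneg (le_of_lt (neg_pos.mpr ht)) h2]

lemma my_minor_pos {m : ℕ} (hme : Even m) (B : Matrix (Fin (m+1)) (Fin (m+1)) ℝ)
    (hdiag : ∀ i, B i i = 0)
    (hsupp : ∀ i j : Fin (m+1), (j : ℕ) ≠ ((i : ℕ) + 1) % (m+1) →
      (i : ℕ) ≠ ((j : ℕ) + 1) % (m+1) → B i j = 0)
    (hneg : ∀ i j : Fin (m+1), (j : ℕ) = ((i : ℕ) + 1) % (m+1) → B i j * B j i < 0)
    (x : ℝ) (i : Fin (m+1)) :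
    0 < ((x • (1 : Matrix (Fin (m+1)) (Fin (m+1)) ℝ) - B).updateCol i
        (Pi.single i 1)).det := by
  set N : Matrix (Fin (m+1)) (Fin (m+1)) ℝ := x • 1 - B with hN
  have hval : ∀ u : Fin (m+1), ((u + 1 : Fin (m+1)) : ℕ) = ((u : ℕ) + 1) % (m+1) := by
    intro u
    rw [Fin.val_add, Fin.val_one']
    conv_rhs => rw [Nat.add_mod]
    rw [Nat.mod_eq_of_lt u.isLt]
  have hkey : ∀ u v : Fin (m+1), v = u + 1 ↔ (v : ℕ) = ((u : ℕ) + 1) % (m+1) := by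
    intro u v
    rw [Fin.ext_iff, hval u]
  set σ : Fin (m+1) ≃ Fin (m+1) := Equiv.addRight (i + 1) with hσ
  have hσapp : ∀ w : Fin (m+1), σ w = w + (i + 1) := fun w => rfl
  have hσl : σ (Fin.last m) = i := by
    rw [hσapp]
    rw [add_comm i 1, ← add_assoc, Fin.last_add_one, zero_add]
  have hshift : ∀ w : Fin (m+1), σ w + 1 = σ (w + 1) := by
    intro w
    rw [hσapp, hσapp, add_right_comm]
  have hadj : ∀ p q : Fin m, (σ q.castSucc = σ p.castSucc + 1) ↔ (q : ℕ) = (p : ℕ) + 1 := by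
    intro p q
    rw [hshift, Equiv.apply_eq_iff_eq, hkey, Fin.coe_castSucc, Fin.coe_castSucc,
      Nat.mod_eq_of_lt (Nat.succ_lt_succ p.isLt)]
  -- step 1 : reindex
  have step1 : (N.updateCol i (Pi.single i 1)).det =
      ((N.submatrix σ σ).updateCol (Fin.last m) (Pi.single (Fin.last m) 1)).det := by
    rw [← Matrix.det_submatrix_equiv_self σ (N.updateCol i (Pi.single i 1))]
    congr 1
    ext k l
    simp only [Matrix.submatrix_apply, Matrix.updateCol_apply, Pi.single_apply]
    have hcl : (σ l = i) ↔ (l = Fin.last m) := by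
      rw [← hσl, Equiv.apply_eq_iff_eq]
    have hck : (σ k = i) ↔ (k = Fin.last m) := by
      rw [← hσl, Equiv.apply_eq_iff_eq]
    by_cases hl : l = Fin.last m
    · rw [if_pos (hcl.mpr hl), if_pos hl]
      by_cases hk : k = Fin.last m
      · rw [if_pos (hck.mpr hk), if_pos hk]
      · rw [if_neg (fun h => hk (hck.mp h)), if_neg hk]
    · rw [if_neg (fun h => hl (hcl.mp h)), if_neg hl]
  rw [step1, my_det_updateCol_single]
  -- step 2 : tridiagonal positivity
  set E := (N.submatrix σ σ).submatrix Fin.castSucc Fin.castSucc with hE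
  have hNoff : ∀ a b : Fin (m+1), a ≠ b → N a b = -B a b := by
    intro a b h
    rw [hN]
    simp [Matrix.sub_apply, Matrix.one_apply_ne h]
  have hNdiag : ∀ a : Fin (m+1), N a a = x := by
    intro a
    rw [hN]
    simp [Matrix.sub_apply, Matrix.one_apply_eq, hdiag a]
  have hcs : ∀ p q : Fin m, p ≠ q → σ p.castSucc ≠ σ q.castSucc := by
    intro p q h hc
    exact h (Fin.castSucc_injective m (σ.injective hc))
  have hEapply : ∀ p q : Fin m, E p q = N (σ p.castSucc) (σ q.castSucc) := fun p q => rfl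
  have hd : ∀ p : Fin m, E p p = x := fun p => by rw [hEapply, hNdiag]
  have hz : ∀ p q : Fin m, (p:ℕ)+1 < (q:ℕ) ∨ (q:ℕ)+1 < (p:ℕ) → E p q = 0 := by
    intro p q h
    have hpq : p ≠ q := by
      intro hh; subst hh; omega
    rw [hEapply, hNoff _ _ (hcs p q hpq)]
    have hB : B (σ p.castSucc) (σ q.castSucc) = 0 := by
      refine hsupp _ _ ?_ ?_
      · intro hc
        have := (hadj p q).mp ((hkey _ _).mpr hc)
        omega
      · intro hc
        have := (hadj q p).mp ((hkey _ _).mpr hc)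
        omega
    rw [hB, neg_zero]
  have hng : ∀ p q : Fin m, (q:ℕ) = (p:ℕ)+1 → E p q * E q p < 0 := by
    intro p q h
    have hpq : p ≠ q := by intro hh; subst hh; omega
    have hadj' : ((σ q.castSucc : Fin (m+1)) : ℕ) = ((σ p.castSucc : ℕ) + 1) % (m+1) :=
      (hkey _ _).mp ((hadj p q).mpr h)
    have := hneg (σ p.castSucc) (σ q.castSucc) hadj'
    rw [hEapply, hEapply, hNoff _ _ (hcs p q hpq), hNoff _ _ (hcs q p hpq.symm)]
    nlinarith [this]
  exact (my_tridiag_pos x m E hd hz hng).1 hme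

/-- Let `B` be an `n×n` real matrix (`n` odd, `n ≥ 3`) supported on a single
`n`-cycle (in both directions) with zero diagonal, in which every undirected
edge is negative: `B i (i+1) * B (i+1) i < 0` for all `i` (indices mod `n`).
Then `B` has exactly one real eigenvalue. -/
theorem stmt_11 (n : ℕ) (hodd : Odd n) (hn : 3 ≤ n)
    (B : Matrix (Fin n) (Fin n) ℝ)
    (hdiag : ∀ i, B i i = 0)
    (hsupp : ∀ i j : Fin n, (j : ℕ) ≠ ((i : ℕ) + 1) % n →
      (i : ℕ) ≠ ((j : ℕ) + 1) % n → B i j = 0)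
    (hneg : ∀ i j : Fin n, (j : ℕ) = ((i : ℕ) + 1) % n → B i j * B j i < 0) :
    Multiset.card B.charpoly.roots = 1 := by
  obtain ⟨m, rfl⟩ : ∃ m, n = m + 1 := ⟨n - 1, by omega⟩
  have hme : Even m := by
    rcases hodd with ⟨t, ht⟩
    exact ⟨t, by omega⟩
  set p := B.charpoly with hp
  have hpderiv : ∀ x : ℝ, 0 < eval x (derivative p) := by
    intro x
    have h1 : derivative p = ∑ i : Fin (m+1),
        ((charmatrix B).updateCol i (fun k => derivative (charmatrix B k i))).det := by
      rw [hp, Matrix.charpoly, my_derivative_det]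
    have h2 : ∀ i : Fin (m+1),
        (((charmatrix B).updateCol i fun k => derivative (charmatrix B k i)).map
          (evalRingHom x)) =
        ((x • (1 : Matrix (Fin (m+1)) (Fin (m+1)) ℝ) - B).updateCol i (Pi.single i 1)) := by
      intro i
      ext k l
      rcases eq_or_ne l i with rfl | hl
      · rcases eq_or_ne k l with rfl | hk
        · simp [Matrix.updateCol_apply, Pi.single_apply]
        · simp [Matrix.updateCol_apply, Pi.single_apply, hk]
      · rcases eq_or_ne k l with rfl | hk
        · simp [Matrix.updateCol_apply, hl, Matrix.sub_apply, Matrix.smul_apply,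
            Matrix.one_apply]
        · simp [Matrix.updateCol_apply, hl, hk, Matrix.sub_apply, Matrix.smul_apply,
            Matrix.one_apply]
    have h3 : eval x (derivative p) = ∑ i : Fin (m+1),
        ((x • (1 : Matrix (Fin (m+1)) (Fin (m+1)) ℝ) - B).updateCol i (Pi.single i 1)).det := by
      rw [h1, ← coe_evalRingHom, map_sum]
      refine Finset.sum_congr rfl fun i _ => ?_
      rw [RingHom.map_det, RingHom.mapMatrix_apply, h2 i]
    rw [h3]
    exact Finset.sum_pos (fun i _ => my_minor_pos hme B hdiag hsupp hneg x i)
      ⟨0, Finset.mem_univ 0⟩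
  have hmono : p.Monic := Matrix.charpoly_monic B
  have hp0 : p ≠ 0 := hmono.ne_zero
  have hdeg : p.natDegree = m + 1 := by
    rw [hp, Matrix.charpoly_natDegree_eq_dim]
    simp
  have hdegpos : 0 < p.degree := natDegree_pos_iff_degree_pos.mp (by rw [hdeg]; omega)
  set g : ℝ → ℝ := fun y => eval y p with hg
  have hsm : StrictMono g := strictMono_of_deriv_pos (fun y => by
    show 0 < deriv (fun z => eval z p) y
    rw [Polynomial.deriv]
    exact hpderiv y)
  have hcont : Continuous g := p.continuous
  have htop : Tendsto g atTop atTop :=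
    p.tendsto_atTop_of_leadingCoeff_nonneg hdegpos (by rw [hmono.leadingCoeff]; norm_num)
  set q : ℝ[X] := p.comp (-X) with hq
  have hqdegpos : 0 < q.degree := by
    refine natDegree_pos_iff_degree_pos.mp ?_
    rw [hq, natDegree_comp]
    simp [hdeg]
  have hqlc : q.leadingCoeff ≤ 0 := by
    rw [hq, leadingCoeff_comp (by simp)]
    rw [hmono.leadingCoeff, one_mul, leadingCoeff_neg, leadingCoeff_X, hdeg,
      Odd.neg_one_pow hme.add_one]
    norm_num
  have hbot : Tendsto g atBot atBot := by
    have h1 : Tendsto (fun y => eval y q) atTop atBot :=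
      q.tendsto_atBot_of_leadingCoeff_nonpos hqdegpos hqlc
    have h2 := h1.comp tendsto_neg_atBot_atTop
    have h3 : ((fun y => eval y q) ∘ Neg.neg) = g := by
      funext y
      simp [hq, eval_comp, Function.comp, hg]
    rwa [h3] at h2
  obtain ⟨r, hr⟩ := hcont.surjective htop hbot 0
  obtain ⟨q1, hq1⟩ := dvd_iff_isRoot.mpr (show p.IsRoot r from hr)
  have hq10 : q1 ≠ 0 := by
    rintro rfl
    rw [mul_zero] at hq1
    exact hp0 hq1
  have hq1r : ¬ q1.IsRoot r := by
    intro h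
    obtain ⟨q2, hq2⟩ := dvd_iff_isRoot.mpr h
    have hz : eval r (derivative p) = 0 := by
      rw [hq1, hq2]
      simp [derivative_mul]
    exact (hpderiv r).ne' hz
  have hq1roots : q1.roots = 0 := by
    refine Multiset.eq_zero_of_forall_notMem fun s hs => ?_
    have hrt : q1.IsRoot s := (mem_roots hq10).mp hs
    have hgs : g s = 0 := by
      show eval s p = 0
      rw [hq1, eval_mul, show eval s q1 = 0 from hrt, mul_zero]
    have hsr : s = r := hsm.injective (by rw [hgs, hr])
    exact hq1r (hsr ▸ hrt)
  show Multiset.card p.roots = 1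
  rw [hq1, roots_mul (hq1 ▸ hp0), roots_X_sub_C, hq1roots]
  simp
end

section
/- The two matrices B1 = [[0,-10,0,-1],[1,0,-10,0],[0,1,0,10],[10,0,-1,0]] and B2 = [[0,-10,0,-1],[10,0,-1,0],[0,1,0,10],[1,0,-10,0]] have the same sign pattern entrywise, but B1 has exactly 2 real eigenvalues while B2 has 0 real eigenvalues. -/
open Polynomial Matrix

lemma det_fin_four' {R : Type*} [CommRing R] (A : Matrix (Fin 4) (Fin 4) R) :
    det A =
      A 0 0 * (A 1 1 * A 2 2 * A 3 3 - A 1 1 * A 2 3 * A 3 2 - A 1 2 * A 2 1 * A 3 3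
        + A 1 2 * A 2 3 * A 3 1 + A 1 3 * A 2 1 * A 3 2 - A 1 3 * A 2 2 * A 3 1)
      - A 0 1 * (A 1 0 * A 2 2 * A 3 3 - A 1 0 * A 2 3 * A 3 2 - A 1 2 * A 2 0 * A 3 3
        + A 1 2 * A 2 3 * A 3 0 + A 1 3 * A 2 0 * A 3 2 - A 1 3 * A 2 2 * A 3 0)
      + A 0 2 * (A 1 0 * A 2 1 * A 3 3 - A 1 0 * A 2 3 * A 3 1 - A 1 1 * A 2 0 * A 3 3
        + A 1 1 * A 2 3 * A 3 0 + A 1 3 * A 2 0 * A 3 1 - A 1 3 * A 2 1 * A 3 0)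
      - A 0 3 * (A 1 0 * A 2 1 * A 3 2 - A 1 0 * A 2 2 * A 3 1 - A 1 1 * A 2 0 * A 3 2
        + A 1 1 * A 2 2 * A 3 0 + A 1 2 * A 2 0 * A 3 1 - A 1 2 * A 2 1 * A 3 0) := by
  have h1 : (Fin.succ 2 : Fin 4) = 3 := rfl
  have h2 : (Fin.castSucc 2 : Fin 4) = 2 := rfl
  have h3 : ((3 : Fin 4) : ℕ) = 3 := rfl
  rw [Matrix.det_succ_row_zero, Fin.sum_univ_four]
  norm_num [Matrix.det_fin_three, Matrix.submatrix_apply, Fin.succAbove, Fin.lt_def, h1, h2, h3]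
  ring

lemma roots_sq_add (c : ℝ) (hc : 0 < c) : (X ^ 2 + C c).roots = 0 := by
  apply Multiset.eq_zero_of_forall_notMem
  intro a ha
  rw [mem_roots, IsRoot] at ha
  · simp only [eval_add, eval_pow, eval_X, eval_C] at ha
    nlinarith [sq_nonneg a, ha]
  · intro h
    have := congrArg (eval 0) h
    simp at this
    linarith

/-- The matrices `B1` and `B2` below have the same entrywise sign pattern, but
`B1` has exactly 2 real eigenvalues while `B2` has 0 real eigenvalues
(counted with multiplicity). -/
theorem stmt_14 :
    let B1 : Matrix (Fin 4) (Fin 4) ℝ :=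
      !![(0:ℝ), -10, 0, -1; 1, 0, -10, 0; 0, 1, 0, 10; 10, 0, -1, 0]
    let B2 : Matrix (Fin 4) (Fin 4) ℝ :=
      !![(0:ℝ), -10, 0, -1; 10, 0, -1, 0; 0, 1, 0, 10; 1, 0, -10, 0]
    (∀ i j, Real.sign (B1 i j) = Real.sign (B2 i j)) ∧
    Multiset.card B1.charpoly.roots = 2 ∧
    Multiset.card B2.charpoly.roots = 0 := by
  intro B1 B2
  refine ⟨?_, ?_, ?_⟩
  · intro i j
    fin_cases i <;> fin_cases j <;> norm_num [B1, B2, Real.sign]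
  · have h1 : B1.charpoly = (X - C 9) * (X - C (-9)) * (X ^ 2 + C 121) := by
      rw [Matrix.charpoly, det_fin_four']
      simp [charmatrix_apply, B1, Matrix.one_apply, Matrix.diagonal_apply, map_ofNat]
      ring
    rw [h1, roots_mul, roots_mul, roots_X_sub_C, roots_X_sub_C,
      roots_sq_add 121 (by norm_num)]
    · simp
    · exact mul_ne_zero (X_sub_C_ne_zero 9) (X_sub_C_ne_zero (-9))
    · refine mul_ne_zero (mul_ne_zero (X_sub_C_ne_zero 9) (X_sub_C_ne_zero (-9))) ?_
      intro h
      have := congrArg (eval 0) h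
      simp at this
  · have h2 : B2.charpoly = (X ^ 2 + C 81) * (X ^ 2 + C 121) := by
      rw [Matrix.charpoly, det_fin_four']
      simp [charmatrix_apply, B2, Matrix.one_apply, Matrix.diagonal_apply, map_ofNat]
      ring
    rw [h2, roots_mul, roots_sq_add 81 (by norm_num), roots_sq_add 121 (by norm_num)]
    · simp
    · intro h
      have := congrArg (eval 0) h
      simp at this
end

section
/- The two matrices B1 = [[0,1,0,1],[-1,0,-1,0],[0,1,0,1],[1,0,1,0]] and B2 = [[0,2,0,1],[-1,0,-1,0],[0,1,0,1],[1,0,1,0]] have the same entrywise sign pattern, but B1 has 4 real eigenvalues (counted with multiplicity) and B2 has exactly 2 real eigenvalues. -/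
open Polynomial Matrix

lemma roots_X_sq_add_one : (X ^ 2 + 1 : ℝ[X]).roots = 0 := by
  apply Multiset.eq_zero_of_forall_notMem
  intro a ha
  have hne : (X ^ 2 + 1 : ℝ[X]) ≠ 0 := by
    intro h
    have := congrArg (eval 0) h
    simp at this
  rw [mem_roots hne] at ha
  have : a ^ 2 + 1 = 0 := by simpa [IsRoot] using ha
  nlinarith [sq_nonneg a]

/-- The matrices `B1` and `B2` below have the same entrywise sign pattern, but
`B1` has 4 real eigenvalues (counted with multiplicity) while `B2` has exactly
2 real eigenvalues. -/
theorem stmt_15 :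
    let B1 : Matrix (Fin 4) (Fin 4) ℝ :=
      !![(0:ℝ), 1, 0, 1; -1, 0, -1, 0; 0, 1, 0, 1; 1, 0, 1, 0]
    let B2 : Matrix (Fin 4) (Fin 4) ℝ :=
      !![(0:ℝ), 2, 0, 1; -1, 0, -1, 0; 0, 1, 0, 1; 1, 0, 1, 0]
    (∀ i j, Real.sign (B1 i j) = Real.sign (B2 i j)) ∧
    Multiset.card B1.charpoly.roots = 4 ∧
    Multiset.card B2.charpoly.roots = 2 := by
  intro B1 B2
  have h1 : B1.charpoly = X ^ 4 := by
    have h : charmatrix B1 = !![X, -1, 0, -1; 1, X, 1, 0; 0, -1, X, -1; -1, 0, -1, X] := by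
      ext i j
      fin_cases i <;> fin_cases j <;> simp [B1, charmatrix_apply, Matrix.one_apply]
    rw [Matrix.charpoly, h]
    simp [Matrix.det_succ_row_zero, Fin.sum_univ_succ, Fin.succAbove,
      Fin.castSucc, Fin.castAdd, Fin.castLE]
    ring
  have h2 : B2.charpoly = X ^ 2 * (X ^ 2 + 1) := by
    have h : charmatrix B2 = !![X, -2, 0, -1; 1, X, 1, 0; 0, -1, X, -1; -1, 0, -1, X] := by
      ext i j
      fin_cases i <;> fin_cases j <;> simp [B2, charmatrix_apply, Matrix.one_apply, map_ofNat]
    rw [Matrix.charpoly, h]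
    simp [Matrix.det_succ_row_zero, Fin.sum_univ_succ, Fin.succAbove,
      Fin.castSucc, Fin.castAdd, Fin.castLE]
    ring
  refine ⟨?_, ?_, ?_⟩
  · intro i j
    fin_cases i <;> fin_cases j <;> simp [B1, B2] <;>
      norm_num [Real.sign, Real.sign_of_pos, Real.sign_of_neg]
  · rw [h1, roots_pow, roots_X]
    simp
  · have hX2 : (X ^ 2 : ℝ[X]) ≠ 0 := pow_ne_zero _ X_ne_zero
    have hq : (X ^ 2 + 1 : ℝ[X]) ≠ 0 := by
      intro h
      have := congrArg (eval 0) h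
      simp at this
    rw [h2, roots_mul (mul_ne_zero hX2 hq), roots_pow, roots_X, roots_X_sq_add_one]
    simp
end
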